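/- Any maximal Arrow's single-peaked domain on a set of size m ≥ 2 contains exactly 2^(m-1) linear orders, and among these there are two extremal orders (one beginning at each of the two terminal elements and ending at the other). -/

import Mathlib

/-- A list `l` represents a linear order on the finite set `A`:
it is duplicate-free and its members are exactly the elements of `A`,
listed from most to least preferred. -/
def IsLinOrd {α : Type*} (A : Finset α) (l : List α) : Prop :=
  l.Nodup ∧ ∀ a : α, a ∈ l ↔ a ∈ A

/-- The restriction of the order `l` to the subset `S`. -/
def restrictList {α : Type*} [DecidableEq α] (l : List α) (S : Finset α) : List α :=
  l.filter (fun a => a ∈ S)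

/-- The domain contraction of `D` on `S`: the set of restrictions to `S`
of the orders in `D` (as a set, so duplicates are automatically removed). -/
def contraction {α : Type*} [DecidableEq α] (D : Set (List α)) (S : Finset α) :
    Set (List α) :=
  (fun l => restrictList l S) '' D

/-- `D` contains a Condorcet triple: elements `a, b, c` and orders
`v₁, v₂, v₃ ∈ D` restricting on `{a,b,c}` to `a≻b≻c`, `b≻c≻a`, `c≻a≻b`. -/
def CondorcetTriple {α : Type*} [DecidableEq α] (D : Set (List α)) : Prop :=
  ∃ a b c : α, a ≠ b ∧ a ≠ c ∧ b ≠ c ∧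
    ∃ v₁ ∈ D, ∃ v₂ ∈ D, ∃ v₃ ∈ D,
      restrictList v₁ {a, b, c} = [a, b, c] ∧
      restrictList v₂ {a, b, c} = [b, c, a] ∧
      restrictList v₃ {a, b, c} = [c, a, b]

/-- A Condorcet domain on `A`: a set of linear orders on `A` with no Condorcet triple. -/
def IsCondorcetDomain {α : Type*} [DecidableEq α] (A : Finset α) (D : Set (List α)) : Prop :=
  (∀ l ∈ D, IsLinOrd A l) ∧ ¬ CondorcetTriple D

/-- A maximal Condorcet domain on `A`: no strict superset is a Condorcet domain on `A`. -/
def IsMaxCondorcetDomain {α : Type*} [DecidableEq α] (A : Finset α) (D : Set (List α)) : Prop :=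
  IsCondorcetDomain A D ∧ ∀ D' : Set (List α), IsCondorcetDomain A D' → D ⊆ D' → D' = D

/-- `x` is a never-bottom element of the triple `T` for `D`:
no order of `D` ranks `x` below both other elements of `T`. -/
def NeverBottom {α : Type*} [DecidableEq α] (D : Set (List α)) (T : Finset α) (x : α) : Prop :=
  x ∈ T ∧ ∀ l ∈ D, (restrictList l T).getLast? ≠ some x

/-- An Arrow's single-peaked domain on `A`: a Condorcet domain such that every
3-element subset of `A` has a never-bottom element. -/
def IsArrowSP {α : Type*} [DecidableEq α] (A : Finset α) (D : Set (List α)) : Prop :=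
  IsCondorcetDomain A D ∧
    ∀ T : Finset α, T ⊆ A → T.card = 3 → ∃ x : α, NeverBottom D T x

/-- A maximal Arrow's single-peaked domain on `A`. -/
def IsMaxArrowSP {α : Type*} [DecidableEq α] (A : Finset α) (D : Set (List α)) : Prop :=
  IsMaxCondorcetDomain A D ∧ IsArrowSP A D

/-- `a` is a terminal element of `D`: some order of `D` ends with (least element) `a`. -/
def TerminalElt {α : Type*} (D : Set (List α)) (a : α) : Prop :=
  ∃ l ∈ D, l.getLast? = some a

/-- `l` is an extremal order of `D`: `l ∈ D`, and the first and last elements of `l`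
are the two terminal elements of `D`. -/
def IsExtremal {α : Type*} (D : Set (List α)) (l : List α) : Prop :=
  l ∈ D ∧ ∃ s t : α, s ≠ t ∧ l.head? = some s ∧ l.getLast? = some t ∧
    TerminalElt D s ∧ TerminalElt D t ∧ ∀ a : α, TerminalElt D a → a = s ∨ a = t

/-- The position of `a` in the order `l`, the first element being in position 1. -/
def posIn {α : Type*} [DecidableEq α] (l : List α) (a : α) : ℕ :=
  l.idxOf a + 1

section AuxiliaryForStmt1

set_option linter.unusedSectionVars false

variable {α : Type*} [DecidableEq α]

lemma mem_restrict {l : List α} {S : Finset α} {a : α} :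
    a ∈ restrictList l S ↔ a ∈ l ∧ a ∈ S := by
  simp [restrictList, List.mem_filter]

lemma triple_rot (a b c : α) : ({b, c, a} : Finset α) = {a, b, c} := by
  ext x; simp only [Finset.mem_insert, Finset.mem_singleton]; tauto

lemma triple_card {a b c : α} (hab : a ≠ b) (hac : a ≠ c) (hbc : b ≠ c) :
    ({a, b, c} : Finset α).card = 3 := by
  rw [Finset.card_insert_of_notMem (by simp [hab, hac]),
    Finset.card_insert_of_notMem (by simp [hbc]), Finset.card_singleton]

lemma triple_subset {A : Finset α} {v : List α} (hv : IsLinOrd A v) {a b c : α}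
    (h : restrictList v {a, b, c} = [a, b, c]) : ({a, b, c} : Finset α) ⊆ A := by
  intro x hx
  have : x ∈ restrictList v {a, b, c} := by
    rw [h]
    simpa using hx
  exact (hv.2 x).mp (mem_restrict.mp this).1

lemma ct_mono {D E : Set (List α)} (h : D ⊆ E) (hD : CondorcetTriple D) :
    CondorcetTriple E := by
  obtain ⟨a, b, c, h1, h2, h3, v₁, m1, v₂, m2, v₃, m3, r⟩ := hD
  exact ⟨a, b, c, h1, h2, h3, v₁, h m1, v₂, h m2, v₃, h m3, r⟩

/-- Normalized Condorcet-triple for a one-order extension: the new order `w`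
can be taken in the first role. -/
lemma cycle_normalize {D : Set (List α)} (hD : ¬ CondorcetTriple D) {w : List α}
    (h : CondorcetTriple (D ∪ {w})) :
    ∃ a b c : α, a ≠ b ∧ a ≠ c ∧ b ≠ c ∧
      restrictList w {a, b, c} = [a, b, c] ∧
      (∃ v₂ ∈ D, restrictList v₂ {a, b, c} = [b, c, a]) ∧
      (∃ v₃ ∈ D, restrictList v₃ {a, b, c} = [c, a, b]) := by
  obtain ⟨a, b, c, hab, hac, hbc, v₁, m1, v₂, m2, v₃, m3, r1, r2, r3⟩ := h
  simp only [Set.union_singleton, Set.mem_insert_iff] at m1 m2 m3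
  have e2 : ({b, c, a} : Finset α) = {a, b, c} := triple_rot a b c
  have e3 : ({c, a, b} : Finset α) = {a, b, c} := by
    rw [← e2]; exact triple_rot b c a
  rcases m1 with rfl | m1
  · rcases m2 with rfl | m2
    · rw [r1] at r2; simp only [List.cons.injEq] at r2; exact absurd r2.1 hab
    rcases m3 with rfl | m3
    · rw [r1] at r3; simp only [List.cons.injEq] at r3; exact absurd r3.1 hac
    exact ⟨a, b, c, hab, hac, hbc, r1, ⟨v₂, m2, r2⟩, ⟨v₃, m3, r3⟩⟩
  · rcases m2 with rfl | m2
    · -- w = v₂ : use names (b, c, a)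
      rcases m3 with rfl | m3
      · rw [r2] at r3; simp only [List.cons.injEq] at r3; exact absurd r3.1 hbc
      exact ⟨b, c, a, hbc, fun h => hab h.symm, fun h => hac h.symm,
        by rw [e2]; exact r2,
        ⟨v₃, m3, by rw [e2]; exact r3⟩, ⟨v₁, m1, by rw [e2]; exact r1⟩⟩
    rcases m3 with rfl | m3
    · -- w = v₃ : use names (c, a, b)
      exact ⟨c, a, b, fun h => hac h.symm, fun h => hbc h.symm, hab,
        by rw [e3]; exact r3,
        ⟨v₁, m1, by rw [e3]; exact r1⟩, ⟨v₂, m2, by rw [e3]; exact r2⟩⟩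
    exact absurd ⟨a, b, c, hab, hac, hbc, v₁, m1, v₂, m2, v₃, m3, r1, r2, r3⟩ hD

lemma blocked {A : Finset α} {D : Set (List α)} (hmax : IsMaxCondorcetDomain A D)
    {w : List α} (hw : IsLinOrd A w) (hwD : w ∉ D) : CondorcetTriple (D ∪ {w}) := by
  by_contra h
  have hcd : IsCondorcetDomain A (D ∪ {w}) := by
    refine ⟨?_, h⟩
    rintro l (hl | rfl)
    · exact hmax.1.1 l hl
    · exact hw
  have := hmax.2 _ hcd Set.subset_union_left
  exact hwD (this ▸ Set.mem_union_right D rfl : w ∈ D)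

/-- The full domain of β-avoiding orders. -/
def DB (A : Finset α) (β : Finset α → α) : Set (List α) :=
  {l | IsLinOrd A l ∧ ∀ T : Finset α, T ⊆ A → T.card = 3 →
      (restrictList l T).getLast? ≠ some (β T)}

lemma DB_condorcet {A : Finset α} {β : Finset α → α}
    (hβ : ∀ T : Finset α, T ⊆ A → T.card = 3 → β T ∈ T) :
    IsCondorcetDomain A (DB A β) := by
  refine ⟨fun l hl => hl.1, ?_⟩
  rintro ⟨a, b, c, hab, hac, hbc, v₁, m1, v₂, m2, v₃, m3, r1, r2, r3⟩
  have hsub : ({a, b, c} : Finset α) ⊆ A := triple_subset m1.1 r1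
  have hcard : ({a, b, c} : Finset α).card = 3 := triple_card hab hac hbc
  have hmem := hβ _ hsub hcard
  simp only [Finset.mem_insert, Finset.mem_singleton] at hmem
  rcases hmem with h | h | h
  · exact m2.2 _ hsub hcard (by rw [r2, h]; simp)
  · exact m3.2 _ hsub hcard (by rw [r3, h]; simp)
  · exact m1.2 _ hsub hcard (by rw [r1, h]; simp)

lemma getLast?_restrict {l : List α} {t : α} {S : Finset α}
    (hl : l.getLast? = some t) (ht : t ∈ S) :
    (restrictList l S).getLast? = some t := by
  obtain ⟨l', rfl⟩ := List.getLast?_eq_some_iff.mp hl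
  rw [show restrictList (l' ++ [t]) S = restrictList l' S ++ [t] by
    simp [restrictList, List.filter_append, ht], List.getLast?_concat]

lemma restrict_append_not_mem {l : List α} {t : α} {S : Finset α} (h : t ∉ S) :
    restrictList (l ++ [t]) S = restrictList l S := by
  simp [restrictList, List.filter_append, h]

lemma restrict_erase_not_mem {l : List α} {t : α} {S : Finset α}
    (hl : l.Nodup) (h : t ∉ S) :
    restrictList (l.erase t) S = restrictList l S := by
  rw [hl.erase_eq_filter]
  unfold restrictList
  rw [List.filter_filter]
  apply List.filter_congr
  intro x _
  by_cases hxS : x ∈ S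
  · have hxt : x ≠ t := by rintro rfl; exact h hxS
    simp [hxS, hxt]
  · simp [hxS]

lemma linord_append_erase {A : Finset α} {l : List α} {t : α}
    (hl : IsLinOrd A (l ++ [t])) : IsLinOrd (A.erase t) l := by
  have hnd := hl.1
  rw [List.nodup_append] at hnd
  obtain ⟨h1, -, h3⟩ := hnd
  have htl : t ∉ l := fun h => h3 t h t (by simp) rfl
  refine ⟨h1, fun a => ?_⟩
  rw [Finset.mem_erase, ← hl.2]
  simp only [List.mem_append, List.mem_singleton]
  constructor
  · intro h; exact ⟨fun he => htl (he ▸ h), Or.inl h⟩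
  · rintro ⟨hne, h | rfl⟩
    · exact h
    · exact absurd rfl hne

lemma linord_erase_append {A : Finset α} {l : List α} {t : α}
    (hl : IsLinOrd (A.erase t) l) (ht : t ∈ A) : IsLinOrd A (l ++ [t]) := by
  have htl : t ∉ l := fun h => (Finset.mem_erase.mp ((hl.2 t).mp h)).1 rfl
  constructor
  · rw [List.nodup_append]
    exact ⟨hl.1, List.nodup_singleton t, by
      intro a ha b hb
      simp only [List.mem_singleton] at hb
      subst hb
      exact fun h => htl (h ▸ ha)⟩
  · intro a
    simp only [List.mem_append, List.mem_singleton, hl.2, Finset.mem_erase]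
    constructor
    · rintro (⟨-, h⟩ | rfl) <;> assumption
    · intro h
      by_cases hat : a = t
      · exact Or.inr hat
      · exact Or.inl ⟨hat, h⟩

lemma linord_erase {A : Finset α} {v : List α} {t : α}
    (hv : IsLinOrd A v) (ht : t ∈ A) : IsLinOrd (A.erase t) (v.erase t) := by
  refine ⟨hv.1.erase t, fun a => ?_⟩
  rw [hv.1.mem_erase_iff, Finset.mem_erase, hv.2]

lemma linord_erase_self_append {A : Finset α} {v : List α} {t : α}
    (hv : IsLinOrd A v) (ht : t ∈ A) : IsLinOrd A ((v.erase t) ++ [t]) :=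
  linord_erase_append (linord_erase hv ht) ht

lemma getLast?_erase {l : List α} {s t : α} (hl : l.getLast? = some s) (hst : s ≠ t) :
    (l.erase t).getLast? = some s := by
  obtain ⟨l', rfl⟩ := List.getLast?_eq_some_iff.mp hl
  rw [List.erase_append]
  by_cases h : t ∈ l'
  · simp [h, List.getLast?_concat]
  · simp [h, List.erase_of_not_mem, hst.symm, List.getLast?_concat]

/-- Closure of `DB` under moving an "allowed" element to the end. -/
lemma DB_erase_append {A : Finset α} {β : Finset α → α} {v : List α}
    (hv : v ∈ DB A β) {t : α} (ht : t ∈ A)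
    (hAll : ∀ T : Finset α, T ⊆ A → T.card = 3 → t ∈ T → β T ≠ t) :
    (v.erase t) ++ [t] ∈ DB A β := by
  refine ⟨linord_erase_self_append hv.1 ht, fun T hTA hT3 => ?_⟩
  by_cases htT : t ∈ T
  · rw [getLast?_restrict (List.getLast?_concat) htT]
    intro h
    exact hAll T hTA hT3 htT (Option.some_injective _ h).symm
  · rw [restrict_append_not_mem htT, restrict_erase_not_mem hv.1.1 htT]
    exact hv.2 T hTA hT3

/-- The tail domain: orders which, with `t` appended, lie in `D`. -/
def tailD (D : Set (List α)) (t : α) : Set (List α) := {l | l ++ [t] ∈ D}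

lemma linords_finite (A : Finset α) : {l : List α | IsLinOrd A l}.Finite := by
  apply Set.Finite.subset (List.finite_toSet A.toList.permutations)
  intro l hl
  simp only [Set.mem_setOf_eq, List.mem_permutations]
  exact (List.perm_ext_iff_of_nodup hl.1 A.nodup_toList).mpr
    (fun a => by rw [hl.2, Finset.mem_toList])

lemma linord_ne_nil {A : Finset α} {l : List α} (hl : IsLinOrd A l) (hA : A.Nonempty) :
    l ≠ [] := by
  obtain ⟨a, ha⟩ := hA
  intro h
  rw [h] at hl
  exact absurd ((hl.2 a).mpr ha) (List.not_mem_nil (a := a))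

lemma linord_two {A : Finset α} {x y : α} (hA : A = {x, y}) (hxy : x ≠ y)
    {l : List α} (hl : IsLinOrd A l) : l = [x, y] ∨ l = [y, x] := by
  have hlen : l.length = 2 := by
    have : l.toFinset = A := by
      ext a
      rw [List.mem_toFinset, hl.2]
    rw [← List.toFinset_card_of_nodup hl.1, this, hA,
      Finset.card_insert_of_notMem (by simp [hxy]), Finset.card_singleton]
  obtain ⟨u, v, rfl⟩ := List.length_eq_two.mp hlen
  have huv : u ≠ v := by
    have := hl.1
    simp only [List.nodup_cons, List.mem_singleton] at this
    exact this.1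
  have hu : u ∈ A := (hl.2 u).mp (by simp)
  have hv : v ∈ A := (hl.2 v).mp (by simp)
  rw [hA] at hu hv
  simp only [Finset.mem_insert, Finset.mem_singleton] at hu hv
  rcases hu with rfl | rfl
  · rcases hv with rfl | rfl
    · exact absurd rfl huv
    · exact Or.inl rfl
  · rcases hv with rfl | rfl
    · exact Or.inr rfl
    · exact absurd rfl huv

lemma max_nonempty {A : Finset α} {D : Set (List α)} (hmax : IsMaxCondorcetDomain A D) :
    D.Nonempty := by
  rcases Set.eq_empty_or_nonempty D with rfl | h
  · exfalso
    have hlin : IsLinOrd A A.toList := ⟨A.nodup_toList, fun a => Finset.mem_toList⟩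
    have hcd : IsCondorcetDomain A {A.toList} := by
      refine ⟨by rintro l rfl; exact hlin, ?_⟩
      intro h
      have h' : CondorcetTriple ((∅ : Set (List α)) ∪ {A.toList}) := by
        simpa using h
      obtain ⟨a, b, c, -, -, -, -, ⟨v₂, hv₂, -⟩, -⟩ :=
        cycle_normalize (by rintro ⟨a, b, c, -, -, -, v, hv, -⟩; exact hv) h'
      exact hv₂
    have := hmax.2 _ hcd (Set.empty_subset _)
    rw [Set.eq_empty_iff_forall_notMem] at this
    exact this A.toList rfl
  · exact h

lemma terminal_mem {A : Finset α} {D : Set (List α)} (hlin : ∀ l ∈ D, IsLinOrd A l)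
    {a : α} (ha : TerminalElt D a) : a ∈ A := by
  obtain ⟨l, hl, hlast⟩ := ha
  exact ((hlin l hl).2 a).mp (List.mem_of_mem_getLast? hlast)

lemma terminal_exists {A : Finset α} {D : Set (List α)} (hmax : IsMaxCondorcetDomain A D)
    (hA : A.Nonempty) : ∃ t, TerminalElt D t := by
  obtain ⟨l, hl⟩ := max_nonempty hmax
  have hne : l ≠ [] := linord_ne_nil (hmax.1.1 l hl) hA
  obtain ⟨u, a, rfl⟩ := List.eq_nil_or_concat l |>.resolve_left hne
  exact ⟨a, u.concat a, hl, by rw [List.concat_eq_append]; exact List.getLast?_concat⟩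

lemma eq_DB_of_max {A : Finset α} {D : Set (List α)} (hD : IsMaxArrowSP A D) (a0 : α) :
    ∃ β : Finset α → α,
      (∀ T : Finset α, T ⊆ A → T.card = 3 → NeverBottom D T (β T)) ∧ D = DB A β := by
  classical
  refine ⟨fun T => if h : T ⊆ A ∧ T.card = 3 then (hD.2.2 T h.1 h.2).choose else a0, ?_, ?_⟩
  · intro T hTA h3
    simp only []
    rw [dif_pos (⟨hTA, h3⟩ : T ⊆ A ∧ T.card = 3)]
    exact (hD.2.2 T hTA h3).choose_spec
  · have hf : ∀ T : Finset α, T ⊆ A → T.card = 3 →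
        NeverBottom D T (if h : T ⊆ A ∧ T.card = 3 then (hD.2.2 T h.1 h.2).choose else a0) := by
      intro T hTA h3
      rw [dif_pos ⟨hTA, h3⟩]
      exact (hD.2.2 T hTA h3).choose_spec
    have hsub : D ⊆ DB A (fun T => if h : T ⊆ A ∧ T.card = 3 then (hD.2.2 T h.1 h.2).choose else a0) := by
      intro l hl
      exact ⟨hD.1.1.1 l hl, fun T hTA h3 => (hf T hTA h3).2 l hl⟩
    exact (hD.1.2 _ (DB_condorcet (fun T hTA h3 => (hf T hTA h3).1)) hsub).symm

lemma allowed_of_terminal {A : Finset α} {D : Set (List α)} {β : Finset α → α}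
    (hDB : D = DB A β) {t : α} (ht : TerminalElt D t) :
    ∀ T : Finset α, T ⊆ A → T.card = 3 → t ∈ T → β T ≠ t := by
  intro T hTA h3 htT heq
  obtain ⟨l, hl, hlast⟩ := ht
  rw [hDB] at hl
  exact hl.2 T hTA h3 (by rw [getLast?_restrict hlast htT, heq])

lemma linord_length {A : Finset α} {l : List α} (hl : IsLinOrd A l) :
    l.length = A.card := by
  have : l.toFinset = A := by
    ext a
    rw [List.mem_toFinset, hl.2]
  rw [← List.toFinset_card_of_nodup hl.1, this]

lemma linord_of_perm {A : Finset α} {l l' : List α} (hp : l.Perm l')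
    (hl : IsLinOrd A l) : IsLinOrd A l' :=
  ⟨hp.nodup_iff.mp hl.1, fun a => (hp.mem_iff).symm.trans (hl.2 a)⟩

lemma erase_append_mem {A : Finset α} {D : Set (List α)} {β : Finset α → α}
    (hDB : D = DB A β) {t : α} (ht : TerminalElt D t) (htA : t ∈ A)
    {v : List α} (hv : v ∈ D) : (v.erase t) ++ [t] ∈ D := by
  rw [hDB] at hv ⊢
  exact DB_erase_append hv htA (allowed_of_terminal hDB ht)

lemma exists_two_terminals {A : Finset α} {D : Set (List α)} (hD : IsMaxArrowSP A D)
    (hA : 2 ≤ A.card) : ∃ s t : α, s ≠ t ∧ TerminalElt D s ∧ TerminalElt D t := by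
  obtain ⟨l, hl⟩ := max_nonempty hD.1
  have hAne : A.Nonempty := Finset.card_pos.mp (by omega)
  have hllin := hD.1.1.1 l hl
  have hlne : l ≠ [] := linord_ne_nil hllin hAne
  obtain ⟨t, hlast⟩ : ∃ t, l.getLast? = some t := by
    rcases h : l.getLast? with - | t
    · exact absurd (List.getLast?_eq_none_iff.mp h) hlne
    · exact ⟨t, rfl⟩
  by_cases hex : ∃ s, TerminalElt D s ∧ s ≠ t
  · obtain ⟨s, hs, hst⟩ := hex
    exact ⟨s, t, hst, hs, ⟨l, hl, hlast⟩⟩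
  exfalso
  push_neg at hex
  have hterm : ∀ s, TerminalElt D s → s = t := hex
  obtain ⟨u, rfl⟩ := List.getLast?_eq_some_iff.mp hlast
  have hune : u ≠ [] := by
    intro h
    subst h
    have := linord_length hllin
    simp at this
    omega
  obtain ⟨p, hp⟩ : ∃ p, u.getLast? = some p := by
    rcases h : u.getLast? with - | p
    · exact absurd (List.getLast?_eq_none_iff.mp h) hune
    · exact ⟨p, rfl⟩
  obtain ⟨u', rfl⟩ := List.getLast?_eq_some_iff.mp hp
  have hpt : p ≠ t := by
    have h1 := hllin.1
    rw [List.append_assoc] at h1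
    have h2 := h1.of_append_right
    simp at h2
    exact h2
  set w := u' ++ [t, p] with hw
  have hperm : ((u' ++ [p]) ++ [t]).Perm w := by
    rw [List.append_assoc]
    exact List.Perm.append_left u' (List.Perm.swap t p [])
  have hwlin := linord_of_perm hperm hllin
  have hwlast : w.getLast? = some p := by
    rw [show w = (u' ++ [t]) ++ [p] by simp [hw]]
    exact List.getLast?_concat
  have hwD : w ∉ D := fun h => hpt (hterm p ⟨w, h, hwlast⟩)
  have hct := blocked hD.1 hwlin hwD
  obtain ⟨a, b, c, hab, hac, hbc, rw1, ⟨v₂, hv₂, r2⟩, ⟨v₃, hv₃, r3⟩⟩ :=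
    cycle_normalize hD.1.1.2 hct
  have hlastD : ∀ v ∈ D, v.getLast? = some t := by
    intro v hv
    obtain ⟨τ, hτ⟩ : ∃ τ, v.getLast? = some τ := by
      rcases h : v.getLast? with - | τ
      · exact absurd (List.getLast?_eq_none_iff.mp h)
          (linord_ne_nil (hD.1.1.1 v hv) hAne)
      · exact ⟨τ, rfl⟩
    rw [hτ, hterm τ ⟨v, hv, hτ⟩]
  by_cases htT : t ∈ ({a, b, c} : Finset α)
  · have ha : a = t := by
      have := getLast?_restrict (hlastD v₂ hv₂) htT
      rw [r2] at this
      simpa using this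
    have hb : b = t := by
      have := getLast?_restrict (hlastD v₃ hv₃) htT
      rw [r3] at this
      simpa using this
    exact hab (ha.trans hb.symm)
  · have heqr : restrictList ((u' ++ [p]) ++ [t]) {a, b, c} = restrictList w {a, b, c} := by
      simp only [hw, restrictList, List.append_assoc, List.filter_append]
      congr 1
      have ht1 : ¬(t = a) := fun h => htT (by simp [h])
      have ht2 : ¬(t = b) := fun h => htT (by simp [h])
      have ht3 : ¬(t = c) := fun h => htT (by simp [h])
      simp [ht1, ht2, ht3]
    exact hD.1.1.2 ⟨a, b, c, hab, hac, hbc, _, hl, v₂, hv₂, v₃, hv₃,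
      heqr.trans rw1, r2, r3⟩

lemma terminal_classify {A : Finset α} {D : Set (List α)} (hD : IsMaxArrowSP A D)
    {s t : α} (hst : s ≠ t) (hs : TerminalElt D s) (ht : TerminalElt D t) :
    ∀ a : α, TerminalElt D a → a = s ∨ a = t := by
  intro a ha
  by_contra h
  push_neg at h
  obtain ⟨has, hat⟩ := h
  have hTA : ({a, s, t} : Finset α) ⊆ A := by
    intro x hx
    simp only [Finset.mem_insert, Finset.mem_singleton] at hx
    rcases hx with rfl | rfl | rfl
    · exact terminal_mem hD.1.1.1 ha
    · exact terminal_mem hD.1.1.1 hs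
    · exact terminal_mem hD.1.1.1 ht
  obtain ⟨x, hxT, hnb⟩ := hD.2.2 _ hTA (triple_card has hat hst)
  simp only [Finset.mem_insert, Finset.mem_singleton] at hxT
  rcases hxT with rfl | rfl | rfl
  · obtain ⟨l, hl, hlast⟩ := ha
    exact hnb l hl (getLast?_restrict hlast (by simp))
  · obtain ⟨l, hl, hlast⟩ := hs
    exact hnb l hl (getLast?_restrict hlast (by simp))
  · obtain ⟨l, hl, hlast⟩ := ht
    exact hnb l hl (getLast?_restrict hlast (by simp))

lemma tailD_linord {A : Finset α} {D : Set (List α)} (hlin : ∀ l ∈ D, IsLinOrd A l)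
    {t : α} {l : List α} (hl : l ∈ tailD D t) : IsLinOrd (A.erase t) l :=
  linord_append_erase (hlin _ hl)

lemma restrict_in_erase {t : α} {T : Finset α} {A : Finset α} (hT : T ⊆ A.erase t)
    (l : List α) : restrictList (l ++ [t]) T = restrictList l T :=
  restrict_append_not_mem (fun h => (Finset.mem_erase.mp (hT h)).1 rfl)

lemma tail_maxASP {A : Finset α} {D : Set (List α)} (hD : IsMaxArrowSP A D)
    {t : α} (ht : TerminalElt D t) : IsMaxArrowSP (A.erase t) (tailD D t) := by
  have htA : t ∈ A := terminal_mem hD.1.1.1 ht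
  obtain ⟨β, hf, hDB⟩ := eq_DB_of_max hD t
  have hclose : ∀ v ∈ D, (v.erase t) ++ [t] ∈ D := fun v hv =>
    erase_append_mem hDB ht htA hv
  have hlin' : ∀ l ∈ tailD D t, IsLinOrd (A.erase t) l := fun l hl =>
    tailD_linord hD.1.1.1 hl
  have hCT' : ¬ CondorcetTriple (tailD D t) := by
    rintro ⟨a, b, c, hab, hac, hbc, v₁, m1, v₂, m2, v₃, m3, r1, r2, r3⟩
    have hTA' : ({a, b, c} : Finset α) ⊆ A.erase t := triple_subset (hlin' v₁ m1) r1
    exact hD.1.1.2 ⟨a, b, c, hab, hac, hbc,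
      v₁ ++ [t], m1, v₂ ++ [t], m2, v₃ ++ [t], m3,
      (restrict_in_erase hTA' v₁).trans r1,
      (restrict_in_erase hTA' v₂).trans r2,
      (restrict_in_erase hTA' v₃).trans r3⟩
  have hASP' : ∀ T : Finset α, T ⊆ A.erase t → T.card = 3 →
      ∃ x, NeverBottom (tailD D t) T x := by
    intro T hTA h3
    obtain ⟨x, hxT, hnb⟩ := hD.2.2 T (hTA.trans (Finset.erase_subset t A)) h3
    refine ⟨x, hxT, fun l hl => ?_⟩
    rw [← restrict_in_erase hTA l]
    exact hnb _ hl
  refine ⟨⟨⟨hlin', hCT'⟩, ?_⟩, ⟨hlin', hCT'⟩, hASP'⟩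
  intro E hE hsub
  refine Set.Subset.antisymm ?_ hsub
  intro w' hw'E
  by_contra hw'D
  have hw'lin : IsLinOrd (A.erase t) w' := hE.1 w' hw'E
  have hwlin : IsLinOrd A (w' ++ [t]) := linord_erase_append hw'lin htA
  have hwD : w' ++ [t] ∉ D := hw'D
  obtain ⟨a, b, c, hab, hac, hbc, rw1, ⟨v₂, hv₂, r2⟩, ⟨v₃, hv₃, r3⟩⟩ :=
    cycle_normalize hD.1.1.2 (blocked hD.1 hwlin hwD)
  have hTA : ({a, b, c} : Finset α) ⊆ A := triple_subset hwlin rw1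
  have h3 : ({a, b, c} : Finset α).card = 3 := triple_card hab hac hbc
  by_cases htT : t ∈ ({a, b, c} : Finset α)
  · obtain ⟨x, hxT, hnb⟩ := hD.2.2 _ hTA h3
    have hc : c = t := by
      have := getLast?_restrict (List.getLast?_concat (l := w')) htT
      rw [rw1] at this
      simpa using this
    simp only [Finset.mem_insert, Finset.mem_singleton] at hxT
    rcases hxT with rfl | rfl | rfl
    · exact hnb v₂ hv₂ (by rw [r2]; simp)
    · exact hnb v₃ hv₃ (by rw [r3]; simp)
    · obtain ⟨lt, hlt, hltlast⟩ := ht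
      exact hnb lt hlt (by rw [hc] at htT ⊢; exact getLast?_restrict hltlast htT)
  · have hTA' : ({a, b, c} : Finset α) ⊆ A.erase t := by
      intro x hx
      exact Finset.mem_erase.mpr ⟨fun h => htT (h ▸ hx), hTA hx⟩
    have hv₂' : v₂.erase t ∈ tailD D t := hclose v₂ hv₂
    have hv₃' : v₃.erase t ∈ tailD D t := hclose v₃ hv₃
    refine hE.2 ⟨a, b, c, hab, hac, hbc, w', hw'E,
      v₂.erase t, hsub hv₂', v₃.erase t, hsub hv₃', ?_, ?_, ?_⟩
    · rw [← restrict_in_erase hTA' w']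
      exact rw1
    · rw [restrict_erase_not_mem (hD.1.1.1 v₂ hv₂).1 htT]
      exact r2
    · rw [restrict_erase_not_mem (hD.1.1.1 v₃ hv₃).1 htT]
      exact r3

lemma head?_append_left {l : List α} (h : l ≠ []) (l' : List α) :
    (l ++ l').head? = l.head? := by
  cases l with
  | nil => exact absurd rfl h
  | cons a l => rfl

lemma tailD_image {D : Set (List α)} (t : α) :
    (fun l => l ++ [t]) '' (tailD D t) = {l | l ∈ D ∧ l.getLast? = some t} := by
  ext l
  constructor
  · rintro ⟨l', hl', rfl⟩
    exact ⟨hl', List.getLast?_concat⟩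
  · rintro ⟨hlD, hlast⟩
    obtain ⟨u, rfl⟩ := List.getLast?_eq_some_iff.mp hlast
    exact ⟨u, hlD, rfl⟩

lemma tailD_ncard {D : Set (List α)} (t : α) :
    {l | l ∈ D ∧ l.getLast? = some t}.ncard = (tailD D t).ncard := by
  rw [← tailD_image]
  exact Set.ncard_image_of_injective _ (fun l₁ l₂ h => by
    have := congrArg List.dropLast h
    simpa using this)

theorem master : ∀ (m : ℕ), 2 ≤ m → ∀ (A : Finset α) (D : Set (List α)), A.card = m →
    IsMaxArrowSP A D →
    D.ncard = 2 ^ (m - 1) ∧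
    ∃ s t : α, s ≠ t ∧ TerminalElt D s ∧ TerminalElt D t ∧
      (∀ a : α, TerminalElt D a → a = s ∨ a = t) ∧
      (∃ P ∈ D, P.head? = some s ∧ P.getLast? = some t) ∧
      (∃ Q ∈ D, Q.head? = some t ∧ Q.getLast? = some s) := by
  intro m hm2
  induction m, hm2 using Nat.le_induction with
  | base =>
    intro A D hA hD
    obtain ⟨x, y, hxy, hAxy⟩ := Finset.card_eq_two.mp hA
    set F : Set (List α) := {[x, y], [y, x]} with hF
    have hlinF : ∀ l ∈ F, IsLinOrd A l := by
      rintro l (rfl | rfl) <;>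
        exact ⟨by simp [hxy, hxy.symm], fun a => by rw [hAxy]; simp; try tauto⟩
    have hFcd : IsCondorcetDomain A F := by
      refine ⟨hlinF, ?_⟩
      rintro ⟨a, b, c, -, -, -, v₁, m1, -, -, -, -, r1, -, -⟩
      have hlen : v₁.length = 2 := by
        have := linord_length (hlinF v₁ m1)
        omega
      have hle := List.length_filter_le (fun a_1 => decide (a_1 ∈ ({a, b, c} : Finset α))) v₁
      rw [show (List.filter (fun a_1 => decide (a_1 ∈ ({a, b, c} : Finset α))) v₁)
          = restrictList v₁ {a, b, c} from rfl, r1, hlen] at hle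
      simp at hle
    have hDF : D ⊆ F := by
      intro l hl
      rcases linord_two hAxy hxy (hD.1.1.1 l hl) with rfl | rfl
      · exact Set.mem_insert _ _
      · exact Set.mem_insert_of_mem _ rfl
    have hFD : F = D := hD.1.2 F hFcd hDF
    have hxyF : [x, y] ∈ D := hFD ▸ Set.mem_insert _ _
    have hyxF : [y, x] ∈ D := hFD ▸ Set.mem_insert_of_mem _ rfl
    refine ⟨?_, x, y, hxy, ⟨[y, x], hyxF, by simp⟩, ⟨[x, y], hxyF, by simp⟩, ?_, 
      ⟨[x, y], hxyF, by simp⟩, ⟨[y, x], hyxF, by simp⟩⟩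
    · rw [← hFD, hF]
      rw [Set.ncard_pair (by simp [hxy])]
      norm_num
    · rintro a ⟨l, hl, hlast⟩
      rw [← hFD] at hl
      rcases hl with rfl | rfl
      · simp at hlast
        exact Or.inr hlast.symm
      · simp at hlast
        exact Or.inl hlast.symm
  | succ n hn IH =>
    intro A D hA hD
    have hA2 : 2 ≤ A.card := by omega
    have hAne : A.Nonempty := Finset.card_pos.mp (by omega)
    obtain ⟨s, t, hst, hs, ht⟩ := exists_two_terminals hD hA2
    have hclass := terminal_classify hD hst hs ht
    have htA : t ∈ A := terminal_mem hD.1.1.1 ht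
    have hsA : s ∈ A := terminal_mem hD.1.1.1 hs
    obtain ⟨β, -, hDB⟩ := eq_DB_of_max hD t
    have hclose_t : ∀ v ∈ D, v.erase t ++ [t] ∈ D := fun v hv =>
      erase_append_mem hDB ht htA hv
    have hclose_s : ∀ v ∈ D, v.erase s ++ [s] ∈ D := fun v hv =>
      erase_append_mem hDB hs hsA hv
    have hcard_t : (A.erase t).card = n := by
      rw [Finset.card_erase_of_mem htA, hA]
      omega
    have hcard_s : (A.erase s).card = n := by
      rw [Finset.card_erase_of_mem hsA, hA]
      omega
    obtain ⟨hcount_t, IHt⟩ := IH (A.erase t) (tailD D t) hcard_t (tail_maxASP hD ht)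
    obtain ⟨hcount_s, IHs⟩ := IH (A.erase s) (tailD D s) hcard_s (tail_maxASP hD hs)
    constructor
    · -- cardinality
      have hDst : D = {l | l ∈ D ∧ l.getLast? = some s} ∪ {l | l ∈ D ∧ l.getLast? = some t} := by
        ext l
        simp only [Set.mem_union, Set.mem_setOf_eq]
        constructor
        · intro hl
          obtain ⟨τ, hτ⟩ : ∃ τ, l.getLast? = some τ := by
            rcases h : l.getLast? with - | τ
            · exact absurd (List.getLast?_eq_none_iff.mp h)
                (linord_ne_nil (hD.1.1.1 l hl) hAne)
            · exact ⟨τ, rfl⟩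
          rcases hclass τ ⟨l, hl, hτ⟩ with rfl | rfl
          · exact Or.inl ⟨hl, hτ⟩
          · exact Or.inr ⟨hl, hτ⟩
        · rintro (⟨h, -⟩ | ⟨h, -⟩) <;> exact h
      have hdisj : Disjoint {l : List α | l ∈ D ∧ l.getLast? = some s}
          {l : List α | l ∈ D ∧ l.getLast? = some t} := by
        rw [Set.disjoint_left]
        rintro l ⟨-, h1⟩ ⟨-, h2⟩
        rw [h1] at h2
        exact hst (Option.some.inj h2)
      have hfins : {l : List α | l ∈ D ∧ l.getLast? = some s}.Finite :=
        Set.Finite.subset (linords_finite A) (fun l hl => hD.1.1.1 l hl.1)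
      have hfint : {l : List α | l ∈ D ∧ l.getLast? = some t}.Finite :=
        Set.Finite.subset (linords_finite A) (fun l hl => hD.1.1.1 l hl.1)
      have hcount : D.ncard = (tailD D s).ncard + (tailD D t).ncard := by
        conv_lhs => rw [hDst]
        rw [Set.ncard_union_eq hdisj hfins hfint, tailD_ncard, tailD_ncard]
      have harith : (2 : ℕ) ^ (n - 1) + 2 ^ (n - 1) = 2 ^ (n + 1 - 1) := by
        rw [show n + 1 - 1 = (n - 1) + 1 by omega, pow_succ]
        ring
      rw [hcount, hcount_s, hcount_t, harith]
    · -- extremal orders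
      obtain ⟨vs, hvs, hvslast⟩ := hs
      obtain ⟨vt, hvt, hvtlast⟩ := ht
      have hsterm_t : TerminalElt (tailD D t) s :=
        ⟨vs.erase t, hclose_t vs hvs, getLast?_erase hvslast hst⟩
      have htterm_s : TerminalElt (tailD D s) t :=
        ⟨vt.erase s, hclose_s vt hvt, getLast?_erase hvtlast hst.symm⟩
      obtain ⟨s₁, t₁, h1ne, hTs₁, hTt₁, hclass₁, ⟨P₁, hP₁, hP₁h, hP₁l⟩, ⟨Q₁, hQ₁, hQ₁h, hQ₁l⟩⟩ := IHt
      obtain ⟨s₂, t₂, h2ne, hTs₂, hTt₂, hclass₂, ⟨P₂, hP₂, hP₂h, hP₂l⟩, ⟨Q₂, hQ₂, hQ₂h, hQ₂l⟩⟩ := IHs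
      have hRt : ∃ R ∈ tailD D t, R.head? = some s := by
        rcases hclass₁ s hsterm_t with rfl | rfl
        · exact ⟨P₁, hP₁, hP₁h⟩
        · exact ⟨Q₁, hQ₁, hQ₁h⟩
      have hRs : ∃ R ∈ tailD D s, R.head? = some t := by
        rcases hclass₂ t htterm_s with rfl | rfl
        · exact ⟨P₂, hP₂, hP₂h⟩
        · exact ⟨Q₂, hQ₂, hQ₂h⟩
      obtain ⟨R, hR, hRh⟩ := hRt
      obtain ⟨R', hR', hR'h⟩ := hRs
      have hRne : R ≠ [] := linord_ne_nil (tailD_linord hD.1.1.1 hR)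
        (Finset.card_pos.mp (by omega))
      have hR'ne : R' ≠ [] := linord_ne_nil (tailD_linord hD.1.1.1 hR')
        (Finset.card_pos.mp (by omega))
      exact ⟨s, t, hst, ⟨vs, hvs, hvslast⟩, ⟨vt, hvt, hvtlast⟩, hclass,
        ⟨R ++ [t], hR, by rw [head?_append_left hRne]; exact hRh, List.getLast?_concat⟩,
        ⟨R' ++ [s], hR', by rw [head?_append_left hR'ne]; exact hR'h, List.getLast?_concat⟩⟩


end AuxiliaryForStmt1

/-- A maximal Arrow's single-peaked domain on a set of size `m ≥ 2` contains exactly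
`2^(m-1)` linear orders, among them two extremal orders, one starting at each of the
two terminal elements and ending at the other. -/
theorem stmt_1 {α : Type*} [DecidableEq α] (A : Finset α) (m : ℕ) (hm : A.card = m)
    (hm2 : 2 ≤ m) (D : Set (List α)) (hD : IsMaxArrowSP A D) :
    D.ncard = 2 ^ (m - 1) ∧
    ∃ s t : α, s ≠ t ∧ TerminalElt D s ∧ TerminalElt D t ∧
      (∀ a : α, TerminalElt D a → a = s ∨ a = t) ∧
      (∃ P ∈ D, P.head? = some s ∧ P.getLast? = some t) ∧
      (∃ Q ∈ D, Q.head? = some t ∧ Q.getLast? = some s) := by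
  exact master m hm2 A D hm hD
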